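/- Let $p\in\mathbb{N}$, $\epsilon>0$, and let $f(z)=z^p-\sum_{k=p+1}^\infty a_k z^k$, $g(z)=z^p-\sum_{k=p+1}^\infty b_k z^k$ with $a_k,b_k\ge 0$, $\sum_{k=p+1}^\infty k|a_k-b_k|\le\epsilon$, and $\sum_{k=p+1}^\infty b_k \le M < 1$. Then for all $z$ in the open unit disc, $\left|\frac{f(z)}{g(z)}-1\right| \le \frac{\epsilon/(p+1)}{1-M}$. -/
import Mathlib


theorem stmt2 (p : ℕ) (hp : 1 ≤ p) (ε M : ℝ) (hε : 0 < ε) (hM : M < 1)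
    (a b : ℕ → ℝ) (ha0 : ∀ k, 0 ≤ a k) (hb0 : ∀ k, 0 ≤ b k)
    (haz : ∀ k, k < p + 1 → a k = 0) (hbz : ∀ k, k < p + 1 → b k = 0)
    (hdsum : Summable (fun k : ℕ => (k : ℝ) * |a k - b k|))
    (hdle : (∑' k : ℕ, (k : ℝ) * |a k - b k|) ≤ ε)
    (hbsum : Summable b) (hble : (∑' k : ℕ, b k) ≤ M)
    (f g : ℂ → ℂ)
    (hf : ∀ z : ℂ, f z = z ^ p - ∑' k : ℕ, (a k : ℂ) * z ^ k)
    (hg : ∀ z : ℂ, g z = z ^ p - ∑' k : ℕ, (b k : ℂ) * z ^ k) :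
    ∀ z : ℂ, ‖z‖ < 1 → z ≠ 0 → ‖f z / g z - 1‖ ≤ (ε / ((p : ℝ) + 1)) / (1 - M) := by
  intro z hz hz0
  have hz1 : ‖z‖ ≤ 1 := le_of_lt hz
  have hzp : 0 < ‖z‖ := norm_pos_iff.mpr hz0
  have hM0 : 0 < 1 - M := by linarith
  have hd0 : ∀ k, k < p + 1 → a k - b k = 0 := fun k hk => by
    rw [haz k hk, hbz k hk, sub_zero]
  have hsd : Summable (fun k => |a k - b k|) := by
    apply Summable.of_nonneg_of_le (fun k => abs_nonneg _) _ hdsum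
    intro k
    rcases Nat.eq_zero_or_pos k with h | h
    · simp [h, hd0 0 (by omega)]
    · have h1 : (1:ℝ) ≤ k := by exact_mod_cast h
      nlinarith [abs_nonneg (a k - b k)]
  set S := ∑' k, |a k - b k| with hS
  have hS0 : 0 ≤ S := tsum_nonneg fun k => abs_nonneg _
  have hSle : S ≤ ε / ((p:ℝ) + 1) := by
    rw [le_div_iff₀ (by positivity)]
    have hrw : S * ((p:ℝ)+1) = ∑' k, |a k - b k| * ((p:ℝ)+1) := by
      rw [hS, tsum_mul_right]
    rw [hrw]
    refine le_trans (Summable.tsum_le_tsum ?_ (hsd.mul_right _) hdsum) hdle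
    intro k
    rcases lt_or_ge k (p+1) with h | h
    · simp [hd0 k h]
    · have h1 : (p:ℝ)+1 ≤ k := by exact_mod_cast h
      nlinarith [abs_nonneg (a k - b k)]
  have hasum : Summable a := by
    have h1 : Summable (fun k => a k - b k) := hsd.of_abs
    have := h1.add hbsum
    simpa using this
  have hza : Summable (fun k => (a k : ℂ) * z ^ k) := by
    apply Summable.of_norm
    apply Summable.of_nonneg_of_le (fun k => norm_nonneg _) _ hasum
    intro k
    rw [norm_mul, norm_pow, Complex.norm_real, Real.norm_eq_abs, abs_of_nonneg (ha0 k)]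
    calc a k * ‖z‖ ^ k ≤ a k * 1 :=
          mul_le_mul_of_nonneg_left (pow_le_one₀ (norm_nonneg z) hz1) (ha0 k)
      _ = a k := mul_one _
  have hzb : Summable (fun k => (b k : ℂ) * z ^ k) := by
    apply Summable.of_norm
    apply Summable.of_nonneg_of_le (fun k => norm_nonneg _) _ hbsum
    intro k
    rw [norm_mul, norm_pow, Complex.norm_real, Real.norm_eq_abs, abs_of_nonneg (hb0 k)]
    calc b k * ‖z‖ ^ k ≤ b k * 1 :=
          mul_le_mul_of_nonneg_left (pow_le_one₀ (norm_nonneg z) hz1) (hb0 k)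
      _ = b k := mul_one _
  have hzd : Summable (fun k => ((b k : ℂ) - a k) * z ^ k) := by
    have := hzb.sub hza
    apply this.congr
    intro k
    ring
  have hfg : f z - g z = ∑' k, ((b k : ℂ) - a k) * z ^ k := by
    rw [hf, hg]
    have h1 : ∑' k, ((b k:ℂ) - a k) * z^k
        = (∑' k, (b k:ℂ)*z^k) - ∑' k, (a k:ℂ)*z^k := by
      rw [← Summable.tsum_sub hzb hza]
      congr 1; ext k; ring
    rw [h1]; ring
  have hnormd : ∀ k, ‖((b k:ℂ) - a k) * z ^ k‖ = |a k - b k| * ‖z‖ ^ k := by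
    intro k
    rw [norm_mul, norm_pow, ← Complex.ofReal_sub, Complex.norm_real, Real.norm_eq_abs, abs_sub_comm]
  have hsnorm : Summable (fun k => ‖((b k:ℂ) - a k) * z ^ k‖) := by
    apply Summable.of_nonneg_of_le (fun k => norm_nonneg _) _ hsd
    intro k
    rw [hnormd k]
    calc |a k - b k| * ‖z‖ ^ k ≤ |a k - b k| * 1 :=
          mul_le_mul_of_nonneg_left (pow_le_one₀ (norm_nonneg z) hz1) (abs_nonneg _)
      _ = |a k - b k| := mul_one _
  have hfgle : ‖f z - g z‖ ≤ S * ‖z‖ ^ p := by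
    rw [hfg]
    refine le_trans (norm_tsum_le_tsum_norm hsnorm) ?_
    rw [hS, ← tsum_mul_right]
    refine Summable.tsum_le_tsum ?_ hsnorm (hsd.mul_right _)
    intro k
    rw [hnormd k]
    rcases lt_or_ge k (p+1) with h | h
    · simp [hd0 k h]
    · exact mul_le_mul_of_nonneg_left
        (pow_le_pow_of_le_one (norm_nonneg z) hz1 (by omega)) (abs_nonneg _)
  have hsbnorm : Summable (fun k => ‖(b k:ℂ) * z ^ k‖) := by
    apply Summable.of_nonneg_of_le (fun k => norm_nonneg _) _ hbsum
    intro k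
    rw [norm_mul, norm_pow, Complex.norm_real, Real.norm_eq_abs, abs_of_nonneg (hb0 k)]
    calc b k * ‖z‖ ^ k ≤ b k * 1 :=
          mul_le_mul_of_nonneg_left (pow_le_one₀ (norm_nonneg z) hz1) (hb0 k)
      _ = b k := mul_one _
  have hTle : ‖∑' k, (b k:ℂ) * z ^ k‖ ≤ M * ‖z‖ ^ p := by
    refine le_trans (norm_tsum_le_tsum_norm hsbnorm) ?_
    have h2 : ∑' k, ‖(b k:ℂ) * z ^ k‖ ≤ ∑' k, b k * ‖z‖ ^ p := by
      refine Summable.tsum_le_tsum ?_ hsbnorm (hbsum.mul_right _)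
      intro k
      rw [norm_mul, norm_pow, Complex.norm_real, Real.norm_eq_abs, abs_of_nonneg (hb0 k)]
      rcases lt_or_ge k (p+1) with h | h
      · simp [hbz k h]
      · exact mul_le_mul_of_nonneg_left
          (pow_le_pow_of_le_one (norm_nonneg z) hz1 (by omega)) (hb0 k)
    refine le_trans h2 ?_
    rw [tsum_mul_right]
    exact mul_le_mul_of_nonneg_right hble (by positivity)
  have hgl : ‖z‖ ^ p * (1 - M) ≤ ‖g z‖ := by
    rw [hg]
    calc ‖z‖ ^ p * (1 - M) = ‖z ^ p‖ - M * ‖z‖ ^ p := by rw [norm_pow]; ring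
      _ ≤ ‖z ^ p‖ - ‖∑' k, (b k:ℂ) * z ^ k‖ := by linarith
      _ ≤ ‖z ^ p - ∑' k, (b k:ℂ) * z ^ k‖ := norm_sub_norm_le _ _
  have hgpos : 0 < ‖g z‖ := lt_of_lt_of_le (by positivity) hgl
  have hgne : g z ≠ 0 := norm_pos_iff.mp hgpos
  have hq : f z / g z - 1 = (f z - g z) / g z := by field_simp
  rw [hq, norm_div]
  calc ‖f z - g z‖ / ‖g z‖ ≤ (S * ‖z‖ ^ p) / (‖z‖ ^ p * (1 - M)) :=
        div_le_div₀ (by positivity) hfgle (by positivity) hgl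
    _ = S / (1 - M) := by
        rw [mul_comm S, mul_div_mul_left _ _ (ne_of_gt (pow_pos hzp p))]
    _ ≤ (ε / ((p:ℝ) + 1)) / (1 - M) := by gcongr
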